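/- Let f : ℝ^d → ℝ have L-Lipschitz continuous gradient, and let the SGD iterate θ' = θ − αg use an unbiased estimator g of ∇f(θ) with component variances σ_i²/s_i, where s_i is given by the gCANS rule s_i = (2Lα/(2−Lα)) σ_i (Σ_j σ_j)/‖∇f(θ)‖². If 0 < α < 1/L, then E[f(θ')] − f(θ) ≤ −(α/4)‖∇f(θ)‖². -/

import Mathlib

open MeasureTheory Real
open scoped BigOperators

open scoped RealInnerProductSpace

lemma descent_lemma {d : ℕ} (f : EuclideanSpace ℝ (Fin d) → ℝ) (L : ℝ) (hL : 0 < L)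
    (hdiff : Differentiable ℝ f)
    (hlip : ∀ x y : EuclideanSpace ℝ (Fin d),
      ‖gradient f x - gradient f y‖ ≤ L * ‖x - y‖)
    (x v : EuclideanSpace ℝ (Fin d)) :
    f (x + v) ≤ f x + ⟪gradient f x, v⟫ + L / 2 * ‖v‖ ^ 2 := by
  set φ : ℝ → ℝ := fun t => f (x + t • v) with hφdef
  have hline : ∀ t : ℝ, HasDerivAt (fun t : ℝ => x + t • v) v t := by
    intro t
    simpa using ((hasDerivAt_id t).smul_const v).const_add x
  have hφ : ∀ t : ℝ, HasDerivAt φ ⟪gradient f (x + t • v), v⟫ t := by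
    intro t
    have hf := ((hdiff (x + t • v)).hasGradientAt).hasFDerivAt
    have := hf.comp_hasDerivAt t (hline t)
    exact this
  have hgradcont : Continuous (gradient f) := by
    apply LipschitzWith.continuous (K := L.toNNReal)
    apply LipschitzWith.of_dist_le_mul
    intro a b
    simpa [dist_eq_norm, Real.coe_toNNReal L hL.le] using hlip a b
  have hφ'cont : Continuous fun t : ℝ => ⟪gradient f (x + t • v), v⟫ := by
    have h1 : Continuous fun t : ℝ => gradient f (x + t • v) :=
      hgradcont.comp (by continuity)
    exact h1.inner continuous_const
  have hftc : f (x + v) - f x = ∫ t in (0:ℝ)..1, ⟪gradient f (x + t • v), v⟫ := by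
    rw [intervalIntegral.integral_eq_sub_of_hasDerivAt
      (fun t _ => hφ t) (hφ'cont.intervalIntegrable 0 1)]
    simp [hφdef]
  have hbound : ∀ t ∈ Set.Icc (0:ℝ) 1,
      ⟪gradient f (x + t • v), v⟫ ≤ ⟪gradient f x, v⟫ + L * ‖v‖ ^ 2 * t := by
    intro t ht
    have h1 : ⟪gradient f (x + t • v) - gradient f x, v⟫
        ≤ ‖gradient f (x + t • v) - gradient f x‖ * ‖v‖ := real_inner_le_norm _ _
    have h2 : ‖gradient f (x + t • v) - gradient f x‖ ≤ L * (t * ‖v‖) := by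
      have := hlip (x + t • v) x
      simpa [norm_smul, abs_of_nonneg ht.1] using this
    have h3 : ⟪gradient f (x + t • v) - gradient f x, v⟫
        = ⟪gradient f (x + t • v), v⟫ - ⟪gradient f x, v⟫ := by
      rw [inner_sub_left]
    nlinarith [norm_nonneg v, mul_le_mul_of_nonneg_right h2 (norm_nonneg v)]
  have hint : (∫ t in (0:ℝ)..1, ⟪gradient f (x + t • v), v⟫)
      ≤ ∫ t in (0:ℝ)..1, (⟪gradient f x, v⟫ + L * ‖v‖ ^ 2 * t) := by
    apply intervalIntegral.integral_mono_on zero_le_one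
      (hφ'cont.intervalIntegrable 0 1)
      ((continuous_const.add (continuous_const.mul continuous_id)).intervalIntegrable 0 1)
      hbound
  have hval : (∫ t in (0:ℝ)..1, (⟪gradient f x, v⟫ + L * ‖v‖ ^ 2 * t))
      = ⟪gradient f x, v⟫ + L / 2 * ‖v‖ ^ 2 := by
    have : (∫ t in (0:ℝ)..1, (⟪gradient f x, v⟫ + L * ‖v‖ ^ 2 * t))
        = (∫ t in (0:ℝ)..1, (⟪gradient f x, v⟫ : ℝ)) + ∫ t in (0:ℝ)..1, L * ‖v‖ ^ 2 * t := by
      apply intervalIntegral.integral_add intervalIntegrable_const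
      exact (continuous_const.mul continuous_id).intervalIntegrable 0 1
    rw [this, intervalIntegral.integral_const_mul, integral_id]
    simp
    ring
  linarith [hftc ▸ (hval ▸ hint)]

/-- **Expected descent of one gCANS step.** With an unbiased gradient estimator whose
component variances are `σᵢ²/sᵢ` and shots chosen by the gCANS rule, a step of size
`0 < α < 1/L` satisfies `E[f(θ − αg)] − f(θ) ≤ −(α/4)‖∇f θ‖²`. -/
theorem gcans_one_step_descent
    (d : ℕ) (f : EuclideanSpace ℝ (Fin d) → ℝ) (L : ℝ) (hL : 0 < L)
    (hdiff : Differentiable ℝ f)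
    (hlip : ∀ x y : EuclideanSpace ℝ (Fin d),
      ‖gradient f x - gradient f y‖ ≤ L * ‖x - y‖)
    {Ω : Type*} [MeasurableSpace Ω] (μ : Measure Ω) [IsProbabilityMeasure μ]
    (θ : EuclideanSpace ℝ (Fin d)) (g : Ω → EuclideanSpace ℝ (Fin d))
    (σ : Fin d → ℝ) (s : Fin d → ℝ) (α : ℝ)
    (hα : 0 < α) (hαL : α < 1 / L)
    (hσ : ∀ i, 0 ≤ σ i) (hσpos : ∃ i, 0 < σ i)
    (hgrad : gradient f θ ≠ 0)
    (hg_int : Integrable g μ)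
    (hg_sq_int : Integrable (fun ω => ‖g ω‖ ^ 2) μ)
    (hf_int : Integrable (fun ω => f (θ - α • g ω)) μ)
    (hmean : ∀ i, (∫ ω, g ω i ∂μ) = gradient f θ i)
    (hvar : ∀ i, (∫ ω, (g ω i - gradient f θ i) ^ 2 ∂μ) = σ i ^ 2 / s i)
    (hs : ∀ i, s i = 2 * L * α / (2 - L * α) * (σ i * ∑ j, σ j) / ‖gradient f θ‖ ^ 2) :
    (∫ ω, f (θ - α • g ω) ∂μ) - f θ ≤ -(α / 4) * ‖gradient f θ‖ ^ 2 := by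
  set G := gradient f θ with hG
  set N := ‖G‖ ^ 2 with hN
  have hLα : L * α < 1 := by
    have := (lt_div_iff₀ hL).mp hαL
    linarith
  have hNpos : 0 < N := by
    rw [hN]
    exact pow_pos (norm_pos_iff.mpr hgrad) 2
  -- norm squared as a sum of squares in Euclidean space
  have hnorm_sq : ∀ x : EuclideanSpace ℝ (Fin d), ‖x‖ ^ 2 = ∑ i, x i ^ 2 := by
    intro x
    rw [EuclideanSpace.norm_eq, Real.sq_sqrt (by positivity)]
    simp [sq_abs]
  -- component integrability
  have hgi : ∀ i, Integrable (fun ω => g ω i) μ := by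
    intro i
    exact (EuclideanSpace.proj i : EuclideanSpace ℝ (Fin d) →L[ℝ] ℝ).integrable_comp hg_int
  have hgi_asm : ∀ i, AEStronglyMeasurable (fun ω => g ω i) μ := fun i => (hgi i).1
  have hgi2 : ∀ i, Integrable (fun ω => g ω i ^ 2) μ := by
    intro i
    apply Integrable.mono' hg_sq_int (((hgi_asm i).mul (hgi_asm i)).congr ?_)
    · filter_upwards with ω
      have h1 : g ω i ^ 2 ≤ ‖g ω‖ ^ 2 := by
        rw [hnorm_sq]
        exact Finset.single_le_sum (fun j _ => sq_nonneg (g ω j)) (Finset.mem_univ i)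
      have h2 : (0:ℝ) ≤ g ω i ^ 2 := sq_nonneg _
      rw [Real.norm_eq_abs, abs_of_nonneg h2]
      exact h1
    · filter_upwards with ω
      show g ω i * g ω i = g ω i ^ 2
      ring
  -- second moments of components
  have hEgi2 : ∀ i, (∫ ω, g ω i ^ 2 ∂μ) = σ i ^ 2 / s i + G i ^ 2 := by
    intro i
    have hexp : (fun ω => (g ω i - G i) ^ 2)
        = fun ω => g ω i ^ 2 - 2 * G i * g ω i + G i ^ 2 := by
      funext ω; ring
    have hB : Integrable (fun ω => 2 * G i * g ω i) μ := (hgi i).const_mul (2 * G i)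
    have hA : Integrable (fun ω => g ω i ^ 2 - 2 * G i * g ω i) μ := (hgi2 i).sub hB
    have h1 : (∫ ω, (g ω i - G i) ^ 2 ∂μ)
        = (∫ ω, g ω i ^ 2 ∂μ) - 2 * G i * (∫ ω, g ω i ∂μ) + G i ^ 2 := by
      rw [hexp]
      rw [integral_add hA (integrable_const _), integral_sub (hgi2 i) hB,
        integral_const_mul]
      simp [measure_univ]
    have h2 := hvar i
    have h3 := hmean i
    rw [h1, h3] at h2
    nlinarith [h2]
  -- expected squared norm
  have hEg2 : (∫ ω, ‖g ω‖ ^ 2 ∂μ) = (∑ i, σ i ^ 2 / s i) + N := by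
    have h1 : (∫ ω, ‖g ω‖ ^ 2 ∂μ) = ∑ i, ∫ ω, g ω i ^ 2 ∂μ := by
      rw [← integral_finset_sum _ (fun i _ => hgi2 i)]
      congr 1; funext ω; exact hnorm_sq (g ω)
    rw [h1]
    rw [Finset.sum_congr rfl (fun i _ => hEgi2 i), Finset.sum_add_distrib]
    congr 1
    rw [hN, hnorm_sq]
  -- expected inner product
  have hinner_eq : ∀ y : EuclideanSpace ℝ (Fin d), ⟪G, y⟫ = ∑ i, G i * y i := by
    intro y
    simp [PiLp.inner_apply, RCLike.inner_apply, conj_trivial]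
    exact Finset.sum_congr rfl (fun i _ => mul_comm _ _)
  have hEinner : (∫ ω, ⟪G, g ω⟫ ∂μ) = N := by
    have h1 : (∫ ω, ⟪G, g ω⟫ ∂μ) = ∑ i, G i * ∫ ω, g ω i ∂μ := by
      simp_rw [hinner_eq]
      rw [integral_finset_sum _ (fun i _ => (hgi i).const_mul (G i))]
      congr 1; funext i
      exact integral_const_mul _ _
    rw [h1]
    rw [hN, hnorm_sq]
    apply Finset.sum_congr rfl
    intro i _
    rw [hmean i]
    ring
  have hinner_int : Integrable (fun ω => ⟪G, g ω⟫) μ :=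
    (innerSL ℝ G).integrable_comp hg_int
  -- pointwise descent
  have hpt : ∀ ω, f (θ - α • g ω)
      ≤ f θ - α * ⟪G, g ω⟫ + L / 2 * (α ^ 2 * ‖g ω‖ ^ 2) := by
    intro ω
    have := descent_lemma f L hL hdiff hlip θ (-(α • g ω))
    have h1 : θ + -(α • g ω) = θ - α • g ω := by rw [sub_eq_add_neg]
    have h2 : ⟪G, -(α • g ω)⟫ = -(α * ⟪G, g ω⟫) := by
      rw [inner_neg_right, real_inner_smul_right]
    have h3 : ‖-(α • g ω)‖ ^ 2 = α ^ 2 * ‖g ω‖ ^ 2 := by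
      rw [norm_neg, norm_smul, Real.norm_eq_abs, mul_pow, sq_abs]
    rw [h1, ← hG, h2, h3] at this
    linarith
  -- integrate
  have hRint : Integrable
      (fun ω => f θ - α * ⟪G, g ω⟫ + L / 2 * (α ^ 2 * ‖g ω‖ ^ 2)) μ := by
    exact ((integrable_const (f θ)).sub (hinner_int.const_mul α)).add
      ((hg_sq_int.const_mul (α ^ 2)).const_mul (L / 2))
  have hkey : (∫ ω, f (θ - α • g ω) ∂μ)
      ≤ f θ - α * N + L / 2 * (α ^ 2 * ((∑ i, σ i ^ 2 / s i) + N)) := by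
    have h1 := integral_mono hf_int hRint hpt
    have h2 : (∫ ω, (f θ - α * ⟪G, g ω⟫ + L / 2 * (α ^ 2 * ‖g ω‖ ^ 2)) ∂μ)
        = f θ - α * N + L / 2 * (α ^ 2 * ((∑ i, σ i ^ 2 / s i) + N)) := by
      have hI3 : Integrable (fun ω => α * ⟪G, g ω⟫) μ := hinner_int.const_mul α
      have hI1 : Integrable (fun ω => f θ - α * ⟪G, g ω⟫) μ := (integrable_const _).sub hI3
      have hI2 : Integrable (fun ω => L / 2 * (α ^ 2 * ‖g ω‖ ^ 2)) μ := by
        have := (hg_sq_int.const_mul (α ^ 2)).const_mul (L / 2)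
        exact this
      rw [integral_add hI1 hI2, integral_sub (integrable_const (f θ)) hI3,
        integral_const_mul, integral_const_mul, integral_const_mul, hEinner, hEg2]
      simp [measure_univ]
    linarith [h2 ▸ h1]
  -- sum of variances via the gCANS shot rule
  have hS : 0 < ∑ j, σ j := by
    obtain ⟨i, hi⟩ := hσpos
    have := Finset.single_le_sum (fun j _ => hσ j) (Finset.mem_univ i)
    linarith
  have hV : (∑ i, σ i ^ 2 / s i) = (2 - L * α) / (2 * L * α) * N := by
    have hterm : ∀ i, σ i ^ 2 / s i
        = σ i * ((2 - L * α) / (2 * L * α * (∑ j, σ j)) * N) := by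
      intro i
      rcases eq_or_lt_of_le (hσ i) with h0 | hpos
      · rw [hs i, ← h0]
        simp
      · have h2mLα : (0:ℝ) < 2 - L * α := by linarith
        rw [hs i]
        field_simp [hpos.ne', hS.ne', hNpos.ne', hL.ne', hα.ne', h2mLα.ne']
    rw [Finset.sum_congr rfl (fun i _ => hterm i), ← Finset.sum_mul]
    field_simp
  -- final algebra
  rw [hV] at hkey
  have hLαpos : 0 < L * α := by positivity
  have hdiv : L / 2 * (α ^ 2 * ((2 - L * α) / (2 * L * α) * N + N))
      = (-(α / 2) + L * α ^ 2 / 4 + α) * N := by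
    field_simp [hL.ne', hα.ne']
    ring
  rw [hdiv] at hkey
  nlinarith [hNpos, hLα, hα,
    mul_nonneg (mul_nonneg (by linarith : (0:ℝ) ≤ 1 - L * α) hα.le) hNpos.le]
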